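/- arXiv:1911.00594 — 2 statements merged into one kernel-verified Lean document; each statement's English description precedes it below -/
import Mathlib

section
/- Three-term cycle law: suppose q₁, q₂, q₃ ∈ ℝ with q₁ ≠ 1, q₂ = ℓ(a₁₂)·q₁, q₃ = ℓ(a₂₃)·q₂, and q₁ = ℓ(a₃₁)·q₃ (all actions well-defined). Then a₃₁ − a₂₃ + a₁₂ = (1 + q₁)/(1 − q₁). -/
noncomputable def mobiusL (a q : ℝ) : ℝ := (a * q + 1 - a) / ((1 + a) * q - a)

lemma mobiusL_ne_one (a q : ℝ) (hq : q ≠ 1) (hd : (1 + a) * q - a ≠ 0) :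
    mobiusL a q ≠ 1 := by
  unfold mobiusL
  intro h
  rw [div_eq_one_iff_eq hd] at h
  apply hq
  nlinarith [h]

lemma mobiusL_t (a q : ℝ) (hq : q ≠ 1) (hd : (1 + a) * q - a ≠ 0) :
    (1 + mobiusL a q) / (1 - mobiusL a q) = 2 * a - (1 + q) / (1 - q) := by
  have h1 : (1:ℝ) - q ≠ 0 := sub_ne_zero.mpr (Ne.symm hq)
  have h2 : (1:ℝ) - mobiusL a q ≠ 0 := sub_ne_zero.mpr (Ne.symm (mobiusL_ne_one a q hq hd))
  unfold mobiusL at h2 ⊢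
  rw [div_eq_iff h2]
  have h3 : ((1 + a) * q - a) ≠ 0 := hd
  rw [one_add_div h3, one_sub_div h3, mul_div_assoc', eq_div_iff h3, div_mul_cancel₀ _ h3]
  rw [← sub_eq_zero]
  field_simp
  ring

theorem three_term_cycle (q1 q2 q3 a12 a23 a31 : ℝ)
    (hq1 : q1 ≠ 1)
    (hd12 : (1 + a12) * q1 - a12 ≠ 0)
    (hd23 : (1 + a23) * q2 - a23 ≠ 0)
    (hd31 : (1 + a31) * q3 - a31 ≠ 0)
    (h12 : q2 = mobiusL a12 q1)
    (h23 : q3 = mobiusL a23 q2)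
    (h31 : q1 = mobiusL a31 q3) :
    a31 - a23 + a12 = (1 + q1) / (1 - q1) := by
  have hq2 : q2 ≠ 1 := h12 ▸ mobiusL_ne_one a12 q1 hq1 hd12
  have hq3 : q3 ≠ 1 := h23 ▸ mobiusL_ne_one a23 q2 hq2 hd23
  have t2 : (1 + q2) / (1 - q2) = 2 * a12 - (1 + q1) / (1 - q1) := by
    rw [h12]; exact mobiusL_t a12 q1 hq1 hd12
  have t3 : (1 + q3) / (1 - q3) = 2 * a23 - (1 + q2) / (1 - q2) := by
    rw [h23]; exact mobiusL_t a23 q2 hq2 hd23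
  have t1 : (1 + q1) / (1 - q1) = 2 * a31 - (1 + q3) / (1 - q3) := by
    conv_lhs => rw [h31]
    exact mobiusL_t a31 q3 hq3 hd31
  rw [t3, t2] at t1
  linarith
end

section
/- Three-term conservation law: under the hypotheses of a three-term cycle starting at q₁ ≠ 1, setting q_aux := (1 + q₁)/2 and a_aux := 1/(1 − q_aux), one has a₃₁ − a₂₃ + a₁₂ − a_aux = −1. -/
theorem three_term_conservation (q1 q2 q3 a12 a23 a31 : ℝ)
    (hq1 : q1 ≠ 1)
    (hd12 : (1 + a12) * q1 - a12 ≠ 0)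
    (hd23 : (1 + a23) * q2 - a23 ≠ 0)
    (hd31 : (1 + a31) * q3 - a31 ≠ 0)
    (h12 : q2 = mobiusL a12 q1)
    (h23 : q3 = mobiusL a23 q2)
    (h31 : q1 = mobiusL a31 q3) :
    a31 - a23 + a12 - 1 / (1 - (1 + q1) / 2) = -1 := by
  unfold mobiusL at h12 h23 h31
  have h1 : (1:ℝ) - q1 ≠ 0 := sub_ne_zero.mpr (fun h => hq1 h.symm)
  rw [eq_div_iff hd12] at h12
  rw [eq_div_iff hd23] at h23
  rw [eq_div_iff hd31] at h31
  have h2 : (1:ℝ) - q2 ≠ 0 := by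
    intro h
    have hq2 : q2 = 1 := by linarith
    subst hq2
    exact hq1 (by linear_combination h12)
  have h3 : (1:ℝ) - q3 ≠ 0 := by
    intro h
    have hq3 : q3 = 1 := by linarith
    subst hq3
    exact h2 (by linear_combination -h23)
  have hx12 : 1/(1-q2) = 1 + a12 - 1/(1-q1) := by
    field_simp
    nlinarith [h12]
  have hx23 : 1/(1-q3) = 1 + a23 - 1/(1-q2) := by
    field_simp
    nlinarith [h23]
  have hx31 : 1/(1-q1) = 1 + a31 - 1/(1-q3) := by
    field_simp
    nlinarith [h31]
  have heq : 1 / (1 - (1 + q1) / 2) = 2 * (1/(1-q1)) := by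
    rw [show (1 - (1+q1)/2) = (1-q1)/2 by ring, one_div_div, div_eq_mul_one_div]
  rw [heq]
  linarith [hx12, hx23, hx31]
end
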